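/- For all λ ∈ [0,1]: ∫_0^1 K( 4λr / (λ+r)² ) · (λ−r) · r / √(1−r²) dr = (π²/8) ( 3λ²/2 − 1 ), where the integrand is interpreted as 0 at r = λ (K diverges logarithmically at argument 1 but the singularity is integrable). -/

import Mathlib

open MeasureTheory Real

/-- The complete elliptic integral of the first kind,
`K(z) = ∫₀^{π/2} (1 - z sin²θ)^{-1/2} dθ`. -/
noncomputable def ellipticK (z : ℝ) : ℝ :=
  ∫ θ in Set.Ioo (0 : ℝ) (Real.pi / 2), (1 - z * Real.sin θ ^ 2) ^ (-(1 / 2) : ℝ)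

open Set

lemma image_Ioo_strictMono {f : ℝ → ℝ} {a b : ℝ} (hab : a ≤ b)
    (hc : ContinuousOn f (Icc a b)) (hm : StrictMonoOn f (Icc a b)) :
    f '' Ioo a b = Ioo (f a) (f b) := by
  apply Subset.antisymm
  · rintro y ⟨x, hx, rfl⟩
    exact ⟨hm (left_mem_Icc.2 hab) (Ioo_subset_Icc_self hx) hx.1,
      hm (Ioo_subset_Icc_self hx) (right_mem_Icc.2 hab) hx.2⟩
  · exact intermediate_value_Ioo hab hc

lemma sin_strictMono (a : ℝ) (ha : 0 < a) :
    StrictMonoOn (fun φ => a * sin φ) (Icc 0 (π/2)) := by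
  intro x hx y hy hxy
  have := Real.strictMonoOn_sin (a := x) (b := y)
    ⟨by linarith [hx.1, pi_pos.le], hx.2⟩ ⟨by linarith [hy.1, pi_pos.le], hy.2⟩ hxy
  exact mul_lt_mul_of_pos_left this ha

lemma sin_subst_image {a : ℝ} (ha : 0 < a) :
    (fun φ => a * sin φ) '' Ioo 0 (π/2) = Ioo 0 a := by
  have := image_Ioo_strictMono (by positivity) (by fun_prop) (sin_strictMono a ha)
  simpa using this

lemma sin_subst {a : ℝ} (ha : 0 < a) (g : ℝ → ℝ) :
    ∫ t in Ioo 0 a, g t = ∫ φ in Ioo 0 (π/2), (a * cos φ) * g (a * sin φ) := by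
  have hder : ∀ x ∈ Ioo (0:ℝ) (π/2), HasDerivWithinAt (fun φ => a * sin φ) (a * cos x) (Ioo (0:ℝ) (π/2)) x :=
    fun x _ => ((Real.hasDerivAt_sin x).const_mul a).hasDerivWithinAt
  rw [← sin_subst_image ha,
    integral_image_eq_integral_abs_deriv_smul measurableSet_Ioo hder
      (((sin_strictMono a ha).injOn).mono Ioo_subset_Icc_self) g]
  apply setIntegral_congr_fun measurableSet_Ioo
  intro x hx
  have : 0 < cos x := Real.cos_pos_of_mem_Ioo ⟨by linarith [hx.1, pi_pos], hx.2⟩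
  simp [abs_of_pos (by positivity : (0:ℝ) < a * cos x)]

lemma sin_subst_integrableOn {a : ℝ} (ha : 0 < a) (g : ℝ → ℝ) :
    IntegrableOn g (Ioo 0 a) ↔
      IntegrableOn (fun φ => (a * cos φ) * g (a * sin φ)) (Ioo 0 (π/2)) := by
  have hder : ∀ x ∈ Ioo (0:ℝ) (π/2), HasDerivWithinAt (fun φ => a * sin φ) (a * cos x) (Ioo (0:ℝ) (π/2)) x :=
    fun x _ => ((Real.hasDerivAt_sin x).const_mul a).hasDerivWithinAt
  rw [← sin_subst_image ha,
    integrableOn_image_iff_integrableOn_abs_deriv_smul measurableSet_Ioo hder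
      (((sin_strictMono a ha).injOn).mono Ioo_subset_Icc_self) g]
  apply integrableOn_congr_fun _ measurableSet_Ioo
  intro x hx
  have : 0 < cos x := Real.cos_pos_of_mem_Ioo ⟨by linarith [hx.1, pi_pos], hx.2⟩
  simp [abs_of_pos (by positivity : (0:ℝ) < a * cos x)]

section Gauss
variable {x : ℝ}

/-- the Gauss substitution map -/
noncomputable def gmap (x φ : ℝ) : ℝ := arcsin ((1+x) * sin φ / (1 + x * sin φ^2))

lemma gmap_hasDerivAt (hx0 : 0 < x) (hx1 : x < 1) {φ : ℝ} (hφ : φ ∈ Ioo (0:ℝ) (π/2)) :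
    HasDerivAt (gmap x)
      ((1+x) * (1 - x * sin φ^2) / ((1 + x * sin φ^2) * sqrt (1 - x^2 * sin φ^2))) φ := by
  have hs0 : 0 < sin φ := Real.sin_pos_of_pos_of_lt_pi hφ.1 (by linarith [hφ.2, pi_pos])
  have hs1 : sin φ < 1 := by
    have h := Real.strictMonoOn_sin (a := φ) (b := π/2)
      ⟨by linarith [hφ.1, pi_pos], hφ.2.le⟩ ⟨by linarith [pi_pos], le_refl _⟩ hφ.2
    simpa using h
  have hc0 : 0 < cos φ := Real.cos_pos_of_mem_Ioo ⟨by linarith [hφ.1, pi_pos], hφ.2⟩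
  have hsc : sin φ^2 + cos φ^2 = 1 := sin_sq_add_cos_sq φ
  set s := sin φ with hs
  set c := cos φ with hc
  have hD : (0:ℝ) < 1 + x * s^2 := by nlinarith
  have hxs : x * s^2 < 1 := by nlinarith
  have hw : (0:ℝ) < 1 - x^2 * s^2 := by nlinarith
  -- derivative of inner function S
  have hS : HasDerivAt (fun φ => (1+x) * sin φ / (1 + x * sin φ^2))
      ((1+x) * c * (1 - x * s^2) / (1 + x * s^2)^2) φ := by
    have h1 : HasDerivAt (fun φ => (1+x) * sin φ) ((1+x) * c) φ :=
      (Real.hasDerivAt_sin φ).const_mul _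
    have h2 : HasDerivAt (fun φ => 1 + x * sin φ^2) (x * (2 * s * c)) φ := by
      have := ((Real.hasDerivAt_sin φ).pow 2).const_mul x
      simpa using (this.const_add 1)
    have := h1.div h2 (by positivity)
    refine this.congr_deriv ?_
    field_simp
    ring
  have hSval : (1+x) * s / (1 + x * s^2) < 1 := by
    rw [div_lt_one hD]; nlinarith
  have hSpos : 0 < (1+x) * s / (1 + x * s^2) := by positivity
  have harc := Real.hasDerivAt_arcsin (x := (1+x) * s / (1 + x * s^2))
    (by linarith) (by linarith)
  have := harc.comp φ hS
  refine this.congr_deriv ?_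
  -- simplify 1/sqrt(1 - S^2) * S'
  have hSsq : 1 - ((1+x) * s / (1 + x * s^2))^2
      = (c * sqrt (1 - x^2 * s^2) / (1 + x * s^2))^2 := by
    have hq := Real.sq_sqrt hw.le
    field_simp
    nlinarith [hq, hsc]
  rw [hSsq, Real.sqrt_sq (by positivity)]
  have hsq : (0:ℝ) < sqrt (1 - x^2 * s^2) := Real.sqrt_pos.2 hw
  field_simp
end Gauss

lemma gmap_continuous (hx0 : 0 < x) : Continuous (gmap x) := by
  unfold gmap
  apply Real.continuous_arcsin.comp
  apply Continuous.div (by fun_prop) (by fun_prop)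
  intro φ
  nlinarith [sq_nonneg (sin φ), sin_sq_le_one φ]

lemma gmap_zero : gmap x 0 = 0 := by simp [gmap]

lemma gmap_pi_div_two (hx0 : 0 < x) : gmap x (π/2) = π/2 := by
  have : (1+x) * sin (π/2) / (1 + x * sin (π/2)^2) = 1 := by
    simp; field_simp
    exact (by linarith : (0:ℝ) < 1+x).ne'
  simp only [gmap, this, Real.arcsin_one]

lemma gmap_strictMono (hx0 : 0 < x) (hx1 : x < 1) :
    StrictMonoOn (gmap x) (Icc 0 (π/2)) := by
  apply strictMonoOn_of_deriv_pos (convex_Icc _ _) ((gmap_continuous hx0).continuousOn)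
  intro φ hφ
  rw [interior_Icc] at hφ
  rw [(gmap_hasDerivAt hx0 hx1 hφ).deriv]
  have hs0 : 0 < sin φ := Real.sin_pos_of_pos_of_lt_pi hφ.1 (by linarith [hφ.2, pi_pos])
  have hs1 : sin φ ≤ 1 := Real.sin_le_one φ
  have hss : sin φ^2 ≤ 1 := by nlinarith
  have h1 : x * sin φ^2 < 1 := by nlinarith [mul_nonneg hx0.le (by nlinarith : (0:ℝ) ≤ 1 - sin φ^2)]
  have h2 : x^2 * sin φ^2 < 1 := by nlinarith [mul_nonneg (mul_nonneg hx0.le hx0.le) (by nlinarith : (0:ℝ) ≤ 1 - sin φ^2)]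
  have hsq := Real.sqrt_pos.2 (by linarith : (0:ℝ) < 1 - x^2 * sin φ^2)
  apply div_pos (by nlinarith) (by positivity)

lemma gmap_image (hx0 : 0 < x) (hx1 : x < 1) :
    (gmap x) '' Ioo 0 (π/2) = Ioo 0 (π/2) := by
  have := image_Ioo_strictMono (by positivity) ((gmap_continuous hx0).continuousOn)
    (gmap_strictMono hx0 hx1)
  rwa [gmap_zero, gmap_pi_div_two hx0] at this

/-- Gauss / descending Landen transformation. -/
lemma gauss_transform (hx0 : 0 < x) (hx1 : x < 1) :
    ∫ θ in Ioo 0 (π/2), 1 / sqrt (1 - (4*x/(1+x)^2) * sin θ^2)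
      = (1+x) * ∫ φ in Ioo 0 (π/2), 1 / sqrt (1 - x^2 * sin φ^2) := by
  have hder : ∀ φ ∈ Ioo (0:ℝ) (π/2), HasDerivWithinAt (gmap x)
      ((1+x) * (1 - x * sin φ^2) / ((1 + x * sin φ^2) * sqrt (1 - x^2 * sin φ^2)))
      (Ioo (0:ℝ) (π/2)) φ :=
    fun φ hφ => (gmap_hasDerivAt hx0 hx1 hφ).hasDerivWithinAt
  have h := integral_image_eq_integral_abs_deriv_smul measurableSet_Ioo hder
      ((gmap_strictMono hx0 hx1).injOn.mono Ioo_subset_Icc_self)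
      (fun θ => 1 / sqrt (1 - (4*x/(1+x)^2) * sin θ^2))
  rw [gmap_image hx0 hx1] at h
  rw [h, ← integral_const_mul]
  apply setIntegral_congr_fun measurableSet_Ioo
  intro φ hφ
  have hs0 : 0 < sin φ := Real.sin_pos_of_pos_of_lt_pi hφ.1 (by linarith [hφ.2, pi_pos])
  have hs1 : sin φ < 1 := by
    have h := Real.strictMonoOn_sin (a := φ) (b := π/2)
      ⟨by linarith [hφ.1, pi_pos], hφ.2.le⟩ ⟨by linarith [pi_pos], le_refl _⟩ hφ.2
    simpa using h
  set s := sin φ with hs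
  have hD : (0:ℝ) < 1 + x * s^2 := by nlinarith
  have hxs : x * s^2 < 1 := by nlinarith
  have hw : (0:ℝ) < 1 - x^2 * s^2 := by nlinarith
  have hsqw : 0 < sqrt (1 - x^2 * s^2) := Real.sqrt_pos.2 hw
  have hSval : (1+x) * s / (1 + x * s^2) < 1 := by
    rw [div_lt_one hD]; nlinarith
  have hSpos : 0 < (1+x) * s / (1 + x * s^2) := by positivity
  have hsin_gmap : sin (gmap x φ) = (1+x) * s / (1 + x * s^2) :=
    Real.sin_arcsin (by linarith) (by linarith)
  have hval : 1 - (4*x/(1+x)^2) * sin (gmap x φ)^2 = ((1 - x*s^2)/(1 + x*s^2))^2 := by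
    rw [hsin_gmap]
    field_simp
    ring
  simp only [smul_eq_mul]
  have h1 : (1:ℝ) - x*s^2 ≠ 0 := ne_of_gt (by nlinarith)
  have h2 : (1:ℝ) + x*s^2 ≠ 0 := ne_of_gt hD
  have h3 : sqrt (1 - x^2*s^2) ≠ 0 := ne_of_gt hsqw
  rw [hval, Real.sqrt_sq (div_nonneg (by nlinarith) hD.le)]
  rw [abs_of_pos (div_pos (by nlinarith) (by positivity)), one_div_div]
  field_simp
  ring

section KK
variable {a b : ℝ}

lemma ellipticK_eq_sqrt {z : ℝ} (hz1 : z ≤ 1) :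
    ellipticK z = ∫ θ in Ioo 0 (π/2), 1 / sqrt (1 - z * sin θ^2) := by
  unfold ellipticK
  apply setIntegral_congr_fun measurableSet_Ioo
  intro θ _
  have h0 : 0 ≤ 1 - z * sin θ^2 := by nlinarith [sin_sq_le_one θ, sq_nonneg (sin θ), sq_nonneg (z * sin θ)]
  show (1 - z * sin θ^2) ^ (-(1/2) : ℝ) = 1 / sqrt (1 - z * sin θ^2)
  rw [Real.rpow_neg h0, ← Real.sqrt_eq_rpow, one_div]

/-- the key kernel identity -/
lemma ellipticK_kernel (ha : 0 < a) (hab : a < b) :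
    ellipticK (4*a*b/(a+b)^2)
      = (a+b) * ∫ t in Ioo 0 a, 1 / (sqrt (b^2 - t^2) * sqrt (a^2 - t^2)) := by
  have hb : 0 < b := ha.trans hab
  have hx0 : 0 < a/b := by positivity
  have hx1 : a/b < 1 := (div_lt_one hb).2 hab
  have hz : (4*a*b/(a+b)^2 : ℝ) = 4*(a/b)/(1+a/b)^2 := by
    field_simp
    ring
  have hz1 : 4*a*b/(a+b)^2 ≤ 1 := by
    rw [div_le_one (by positivity)]; nlinarith [sq_nonneg (a-b)]
  rw [ellipticK_eq_sqrt hz1, hz, gauss_transform hx0 hx1]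
  -- now relate RHS
  rw [sin_subst ha (fun t => 1 / (sqrt (b^2 - t^2) * sqrt (a^2 - t^2))), ← integral_const_mul,
    ← integral_const_mul]
  apply setIntegral_congr_fun measurableSet_Ioo
  intro φ hφ
  have hc0 : 0 < cos φ := Real.cos_pos_of_mem_Ioo ⟨by linarith [hφ.1, pi_pos], hφ.2⟩
  have h1 : a^2 - (a * sin φ)^2 = (a * cos φ)^2 := by
    have := sin_sq_add_cos_sq φ; nlinarith
  have h2 : b^2 - (a * sin φ)^2 = b^2 - a^2 * sin φ^2 := by ring
  have hw : (0:ℝ) < b^2 - a^2 * sin φ^2 := by nlinarith [sin_sq_le_one φ, sq_nonneg (sin φ)]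
  have h4 : b^2 - a^2 * sin φ^2 = b^2 * (1 - (a/b)^2 * sin φ^2) := by field_simp
  have h5 : sqrt (b^2 - a^2 * sin φ^2) = b * sqrt (1 - (a/b)^2 * sin φ^2) := by
    rw [h4, Real.sqrt_mul (by positivity), Real.sqrt_sq hb.le]
  have hx2 : (a/b)^2 < 1 := by nlinarith
  have hw' : (0:ℝ) < 1 - (a/b)^2 * sin φ^2 := by
    nlinarith [mul_le_mul_of_nonneg_left (sin_sq_le_one φ) (sq_nonneg (a/b))]
  have hsq' : 0 < sqrt (1 - (a/b)^2 * sin φ^2) := Real.sqrt_pos.2 hw'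
  dsimp only
  rw [h1, h2, Real.sqrt_sq_eq_abs, abs_of_pos (by positivity), h5]
  field_simp
  ring

lemma kernel_integrableOn (ha : 0 < a) (hab : a < b) :
    IntegrableOn (fun t => 1 / (sqrt (b^2 - t^2) * sqrt (a^2 - t^2))) (Ioo 0 a) := by
  rw [sin_subst_integrableOn ha]
  have : IntegrableOn (fun φ => 1 / sqrt (b^2 - a^2 * sin φ^2)) (Ioo 0 (π/2)) := by
    apply (ContinuousOn.integrableOn_Icc ?_).mono_set Ioo_subset_Icc_self
    apply ContinuousOn.div continuousOn_const (by fun_prop)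
    intro x _
    apply Real.sqrt_ne_zero'.2
    nlinarith [sin_sq_le_one x, sq_nonneg (sin x)]
  apply this.congr_fun ?_ measurableSet_Ioo
  intro φ hφ
  have hc0 : 0 < cos φ := Real.cos_pos_of_mem_Ioo ⟨by linarith [hφ.1, pi_pos], hφ.2⟩
  have h1 : a^2 - (a * sin φ)^2 = (a * cos φ)^2 := by
    have := sin_sq_add_cos_sq φ; nlinarith
  have h2 : b^2 - (a * sin φ)^2 = b^2 - a^2 * sin φ^2 := by ring
  have hw : (0:ℝ) < b^2 - a^2 * sin φ^2 := by nlinarith [sin_sq_le_one φ, sq_nonneg (sin φ)]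
  have h3 : sqrt (b^2 - a^2 * sin φ^2) ≠ 0 := ne_of_gt (Real.sqrt_pos.2 hw)
  simp only
  rw [h1, h2, Real.sqrt_sq_eq_abs, abs_of_pos (by positivity)]
  field_simp
  try ring

end KK

section J
variable {l t : ℝ}

noncomputable def rmap (t ψ : ℝ) : ℝ := sqrt ((1+t^2)/2 + (1-t^2)/2 * sin ψ)

lemma sin_bounds {ψ : ℝ} (hψ : ψ ∈ Ioo (-(π/2)) (π/2)) : -1 < sin ψ ∧ sin ψ < 1 := by
  constructor
  · have := Real.sin_lt_sin_of_lt_of_le_pi_div_two (x := -(π/2)) (y := ψ)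
      (le_refl _) hψ.2.le hψ.1
    simpa using this
  · have := Real.sin_lt_sin_of_lt_of_le_pi_div_two (x := ψ) (y := π/2)
      hψ.1.le (le_refl _) hψ.2
    simpa using this

lemma rmap_inner_pos (ht0 : 0 < t) (ht1 : t < 1) {ψ : ℝ} (hψ : ψ ∈ Ioo (-(π/2)) (π/2)) :
    0 < (1+t^2)/2 + (1-t^2)/2 * sin ψ := by
  have h := (sin_bounds hψ).1
  nlinarith [(sin_bounds hψ).2]

lemma rmap_hasDerivAt (ht0 : 0 < t) (ht1 : t < 1) {ψ : ℝ} (hψ : ψ ∈ Ioo (-(π/2)) (π/2)) :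
    HasDerivAt (rmap t) ((1-t^2)/2 * cos ψ / (2 * rmap t ψ)) ψ := by
  have hpos := rmap_inner_pos ht0 ht1 hψ
  have hin : HasDerivAt (fun ψ => (1+t^2)/2 + (1-t^2)/2 * sin ψ) ((1-t^2)/2 * cos ψ) ψ :=
    ((Real.hasDerivAt_sin ψ).const_mul _).const_add _
  have := (Real.hasDerivAt_sqrt (ne_of_gt hpos)).comp ψ hin
  refine this.congr_deriv ?_
  unfold rmap
  ring

lemma rmap_continuous (t : ℝ) : Continuous (rmap t) := by
  unfold rmap; fun_prop

lemma rmap_strictMono (ht0 : 0 < t) (ht1 : t < 1) :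
    StrictMonoOn (rmap t) (Icc (-(π/2)) (π/2)) := by
  apply strictMonoOn_of_deriv_pos (convex_Icc _ _) (rmap_continuous t).continuousOn
  intro ψ hψ
  rw [interior_Icc] at hψ
  rw [(rmap_hasDerivAt ht0 ht1 hψ).deriv]
  have hpos := rmap_inner_pos ht0 ht1 hψ
  have hc : 0 < cos ψ := Real.cos_pos_of_mem_Ioo hψ
  have : 0 < rmap t ψ := Real.sqrt_pos.2 hpos
  have hq : (0:ℝ) < (1-t^2)/2 := by nlinarith
  positivity

lemma rmap_image (ht0 : 0 < t) (ht1 : t < 1) :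
    (rmap t) '' Ioo (-(π/2)) (π/2) = Ioo t 1 := by
  have h0 : rmap t (-(π/2)) = t := by
    unfold rmap; simp only [Real.sin_neg, Real.sin_pi_div_two, mul_neg, mul_one]
    rw [show (1+t^2)/2 + -((1-t^2)/2) = t^2 by ring]
    exact Real.sqrt_sq ht0.le
  have h1 : rmap t (π/2) = 1 := by
    unfold rmap; simp only [Real.sin_pi_div_two, mul_one]
    rw [show (1+t^2)/2 + (1-t^2)/2 = (1:ℝ) by ring]
    exact Real.sqrt_one
  have := image_Ioo_strictMono (by linarith [pi_pos] : -(π/2) ≤ π/2)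
    (rmap_continuous t).continuousOn (rmap_strictMono ht0 ht1)
  rwa [h0, h1] at this

lemma radial_integral (ht0 : 0 < t) (ht1 : t < 1) (l : ℝ) :
    ∫ r in Ioo t 1, (l^2 - r^2) * r / (sqrt (1 - r^2) * sqrt (r^2 - t^2))
      = π/2 * (l^2 - (1+t^2)/2) := by
  have hder : ∀ ψ ∈ Ioo (-(π/2)) (π/2), HasDerivWithinAt (rmap t)
      ((1-t^2)/2 * cos ψ / (2 * rmap t ψ)) (Ioo (-(π/2)) (π/2)) ψ :=
    fun ψ hψ => (rmap_hasDerivAt ht0 ht1 hψ).hasDerivWithinAt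
  have h := integral_image_eq_integral_abs_deriv_smul measurableSet_Ioo hder
    ((rmap_strictMono ht0 ht1).injOn.mono Ioo_subset_Icc_self)
    (fun r => (l^2 - r^2) * r / (sqrt (1 - r^2) * sqrt (r^2 - t^2)))
  rw [rmap_image ht0 ht1] at h
  rw [h]
  have hcongr : ∀ ψ ∈ Ioo (-(π/2)) (π/2),
      |(1-t^2)/2 * cos ψ / (2 * rmap t ψ)| •
        ((l^2 - (rmap t ψ)^2) * rmap t ψ / (sqrt (1 - (rmap t ψ)^2) * sqrt ((rmap t ψ)^2 - t^2)))
      = (l^2 - (1+t^2)/2 - (1-t^2)/2 * sin ψ) / 2 := by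
    intro ψ hψ
    have hpos := rmap_inner_pos ht0 ht1 hψ
    have hr : 0 < rmap t ψ := Real.sqrt_pos.2 hpos
    have hc : 0 < cos ψ := Real.cos_pos_of_mem_Ioo hψ
    have hq : (0:ℝ) < (1-t^2)/2 := by nlinarith
    have hsb := sin_bounds hψ
    have hr2 : (rmap t ψ)^2 = (1+t^2)/2 + (1-t^2)/2 * sin ψ := Real.sq_sqrt hpos.le
    have h1r : 1 - (rmap t ψ)^2 = (1-t^2)/2 * (1 - sin ψ) := by rw [hr2]; ring
    have hrt : (rmap t ψ)^2 - t^2 = (1-t^2)/2 * (1 + sin ψ) := by rw [hr2]; ring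
    have hsqprod : sqrt (1 - (rmap t ψ)^2) * sqrt ((rmap t ψ)^2 - t^2)
        = (1-t^2)/2 * cos ψ := by
      rw [h1r, hrt, ← Real.sqrt_mul (by nlinarith)]
      rw [show (1-t^2)/2 * (1 - sin ψ) * ((1-t^2)/2 * (1 + sin ψ))
          = ((1-t^2)/2 * cos ψ)^2 by
        linear_combination (-((1-t^2)/2)^2) * (sin_sq_add_cos_sq ψ)]
      exact Real.sqrt_sq (by positivity)
    have hRne : rmap t ψ ≠ 0 := ne_of_gt hr
    have hcne : cos ψ ≠ 0 := ne_of_gt hc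
    have h1t : (1:ℝ) - t^2 ≠ 0 := by nlinarith
    rw [smul_eq_mul, hsqprod, abs_of_pos (by positivity), hr2]
    field_simp
    ring
  rw [setIntegral_congr_fun measurableSet_Ioo hcongr]
  have : ∫ ψ in Ioo (-(π/2)) (π/2), (l^2 - (1+t^2)/2 - (1-t^2)/2 * sin ψ) / 2
      = ∫ ψ in (-(π/2))..(π/2), (l^2 - (1+t^2)/2 - (1-t^2)/2 * sin ψ) / 2 := by
    rw [intervalIntegral.integral_of_le (by linarith [pi_pos]), integral_Ioc_eq_integral_Ioo]
  rw [this]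
  have hsplit : ∀ ψ : ℝ, (l^2 - (1+t^2)/2 - (1-t^2)/2 * sin ψ) / 2
      = (l^2 - (1+t^2)/2)/2 - (1-t^2)/4 * sin ψ := by intro ψ; ring
  simp_rw [hsplit]
  rw [intervalIntegral.integral_sub (intervalIntegrable_const) ((intervalIntegral.intervalIntegrable_sin).const_mul _)]
  rw [intervalIntegral.integral_const, intervalIntegral.integral_const_mul, integral_sin]
  simp
  ring
end J

section Extra

lemma half_kernel_integral {a : ℝ} (ha : 0 < a) :
    ∫ t in Ioo 0 a, 1 / sqrt (a^2 - t^2) = π/2 := by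
  rw [sin_subst ha (fun t => 1 / sqrt (a^2 - t^2))]
  have : ∀ φ ∈ Ioo (0:ℝ) (π/2),
      (a * cos φ) * (1 / sqrt (a^2 - (a * sin φ)^2)) = 1 := by
    intro φ hφ
    have hc0 : 0 < cos φ := Real.cos_pos_of_mem_Ioo ⟨by linarith [hφ.1, pi_pos], hφ.2⟩
    have h1 : a^2 - (a * sin φ)^2 = (a * cos φ)^2 := by
      have := sin_sq_add_cos_sq φ; nlinarith
    rw [h1, Real.sqrt_sq (by positivity)]
    field_simp
  rw [setIntegral_congr_fun measurableSet_Ioo this]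
  simp [Real.volume_Ioo, ENNReal.toReal_ofReal (by positivity : (0:ℝ) ≤ π/2)]
  positivity

lemma half_kernel_integrableOn {a : ℝ} (ha : 0 < a) :
    IntegrableOn (fun t => 1 / sqrt (a^2 - t^2)) (Ioo 0 a) := by
  rw [sin_subst_integrableOn ha]
  have : IntegrableOn (fun _ : ℝ => (1:ℝ)) (Ioo 0 (π/2)) :=
    integrableOn_const (by simp [Real.volume_Ioo]) (by simp)
  apply this.congr_fun ?_ measurableSet_Ioo
  intro φ hφ
  have hc0 : 0 < cos φ := Real.cos_pos_of_mem_Ioo ⟨by linarith [hφ.1, pi_pos], hφ.2⟩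
  have h1 : a^2 - (a * sin φ)^2 = (a * cos φ)^2 := by
    have := sin_sq_add_cos_sq φ; nlinarith
  simp only
  rw [h1, Real.sqrt_sq (by positivity)]
  field_simp

lemma one_div_sqrt_integrableOn :
    IntegrableOn (fun r : ℝ => 1 / sqrt (1 - r^2)) (Ioo 0 1) := by
  have := half_kernel_integrableOn (a := 1) one_pos
  simpa using this

lemma sin_sq_Ioo : ∫ r in Ioo (0:ℝ) 1, r^2 / sqrt (1 - r^2) = π/4 := by
  rw [show (Ioo (0:ℝ) 1) = Ioo 0 1 from rfl]
  have h := sin_subst (a := 1) one_pos (fun r => r^2 / sqrt (1 - r^2))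
  simp only [one_mul] at h
  rw [h]
  have : ∀ φ ∈ Ioo (0:ℝ) (π/2),
      cos φ * (sin φ^2 / sqrt (1 - sin φ^2)) = sin φ^2 := by
    intro φ hφ
    have hc0 : 0 < cos φ := Real.cos_pos_of_mem_Ioo ⟨by linarith [hφ.1, pi_pos], hφ.2⟩
    have h1 : 1 - sin φ^2 = cos φ^2 := by
      have := sin_sq_add_cos_sq φ; linarith
    rw [h1, Real.sqrt_sq hc0.le]
    field_simp
  rw [setIntegral_congr_fun measurableSet_Ioo this]
  rw [← integral_Ioc_eq_integral_Ioo, ← intervalIntegral.integral_of_le (by positivity)]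
  rw [integral_sin_sq]
  simp
  ring

end Extra
section Main
variable {l : ℝ}

/-- the Fubini kernel -/
noncomputable def Gfun (l r t : ℝ) : ℝ :=
  if 0 < t ∧ t < l ∧ t < r then
    (l^2 - r^2) * r / Real.sqrt (1-r^2) * (1/(Real.sqrt (l^2-t^2) * Real.sqrt (r^2-t^2)))
  else 0

lemma Gfun_measurable (l : ℝ) : Measurable (Function.uncurry (Gfun l)) := by
  unfold Gfun Function.uncurry
  have hset : MeasurableSet {p : ℝ × ℝ | 0 < p.2 ∧ p.2 < l ∧ p.2 < p.1} :=
    MeasurableSet.inter (measurableSet_lt measurable_const measurable_snd)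
      (MeasurableSet.inter (measurableSet_lt measurable_snd measurable_const)
        (measurableSet_lt measurable_snd measurable_fst))
  refine Measurable.ite hset ?_ measurable_const
  fun_prop

lemma Gfun_eq_indicator_t (r : ℝ) :
    Gfun l r = (Ioo 0 (min l r)).indicator
      (fun t => (l^2 - r^2) * r / Real.sqrt (1-r^2) *
        (1/(Real.sqrt (l^2-t^2) * Real.sqrt (r^2-t^2)))) := by
  funext t
  simp only [Gfun, Set.indicator, mem_Ioo, lt_min_iff]

lemma Gfun_self (hl : 0 < l) (t : ℝ) : Gfun l l t = 0 := by
  simp only [Gfun]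
  split <;> simp

section Bounds

lemma kernel_integral_bound {a b : ℝ} (ha : 0 < a) (hab : a < b) :
    ∫ t in Ioo 0 a, 1/(Real.sqrt (b^2-t^2) * Real.sqrt (a^2-t^2))
      ≤ (1/Real.sqrt (b^2-a^2)) * (π/2) := by
  have hZ : 0 < Real.sqrt (b^2-a^2) := Real.sqrt_pos.2 (by nlinarith)
  have hmono : ∀ t ∈ Ioo (0:ℝ) a,
      1/(Real.sqrt (b^2-t^2) * Real.sqrt (a^2-t^2))
        ≤ (1/Real.sqrt (b^2-a^2)) * (1/Real.sqrt (a^2-t^2)) := by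
    intro t ht
    have hY : 0 < Real.sqrt (a^2-t^2) := Real.sqrt_pos.2 (by nlinarith [ht.1, ht.2])
    have hZX : Real.sqrt (b^2-a^2) ≤ Real.sqrt (b^2-t^2) :=
      Real.sqrt_le_sqrt (by nlinarith [ht.1, ht.2])
    rw [div_mul_div_comm, one_mul]
    exact one_div_le_one_div_of_le (by positivity)
      (mul_le_mul_of_nonneg_right hZX hY.le)
  calc ∫ t in Ioo 0 a, 1/(Real.sqrt (b^2-t^2) * Real.sqrt (a^2-t^2))
      ≤ ∫ t in Ioo 0 a, (1/Real.sqrt (b^2-a^2)) * (1/Real.sqrt (a^2-t^2)) := by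
        apply setIntegral_mono_on (kernel_integrableOn ha hab)
          ((half_kernel_integrableOn ha).const_mul _) measurableSet_Ioo hmono
    _ = (1/Real.sqrt (b^2-a^2)) * (π/2) := by
        rw [integral_const_mul, half_kernel_integral ha]

lemma Gfun_section_integrable (hl0 : 0 < l) {r : ℝ} (hr : r ∈ Ioo (0:ℝ) 1) :
    Integrable (fun t => Gfun l r t) (volume.restrict (Ioo 0 1)) := by
  rcases eq_or_ne r l with rfl | hrl
  · have : (fun t => Gfun r r t) = fun _ => (0:ℝ) := by
      funext t; simp only [Gfun]; split <;> simp
    rw [this]; exact integrable_zero _ _ _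
  rw [Gfun_eq_indicator_t]
  rw [integrable_indicator_iff measurableSet_Ioo]
  have hmin1 : min l r ≤ r := min_le_right _ _
  have hminpos : 0 < min l r := lt_min hl0 hr.1
  have hsub : Ioo 0 (min l r) ⊆ Ioo (0:ℝ) 1 :=
    Ioo_subset_Ioo (le_refl _) (le_of_lt (lt_of_le_of_lt hmin1 hr.2))
  rw [IntegrableOn, Measure.restrict_restrict measurableSet_Ioo,
    inter_eq_left.2 hsub]
  rcases lt_or_gt_of_ne hrl with h | h
  · rw [min_eq_right h.le]
    exact (kernel_integrableOn hr.1 h).const_mul _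
  · rw [min_eq_left h.le]
    have h2 := (kernel_integrableOn hl0 h).const_mul ((l^2 - r^2) * r / Real.sqrt (1-r^2))
    refine IntegrableOn.congr_fun h2 ?_ measurableSet_Ioo
    intro t _
    dsimp only
    rw [mul_comm (Real.sqrt (r^2-t^2))]

lemma Gfun_norm_integral_le (hl0 : 0 < l) (hl1 : l ≤ 1) {r : ℝ} (hr : r ∈ Ioo (0:ℝ) 1) :
    ∫ t, ‖Gfun l r t‖ ∂(volume.restrict (Ioo 0 1)) ≤ (π/2) / Real.sqrt (1-r^2) := by
  have hsq1 : 0 < Real.sqrt (1-r^2) := Real.sqrt_pos.2 (by nlinarith [hr.1, hr.2])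
  rcases eq_or_ne r l with rfl | hrl
  · have : (fun t => ‖Gfun r r t‖) = fun _ => (0:ℝ) := by
      funext t; simp only [Gfun]; split <;> simp
    rw [this]; simp; positivity
  have hminpos : 0 < min l r := lt_min hl0 hr.1
  have hmin1 : min l r ≤ r := min_le_right _ _
  have hsub : Ioo 0 (min l r) ⊆ Ioo (0:ℝ) 1 :=
    Ioo_subset_Ioo (le_refl _) (le_of_lt (lt_of_le_of_lt hmin1 hr.2))
  set c := (l^2 - r^2) * r / Real.sqrt (1-r^2) with hc
  have habs : ∀ t, ‖Gfun l r t‖ = (Ioo 0 (min l r)).indicator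
      (fun t => ‖c * (1/(Real.sqrt (l^2-t^2) * Real.sqrt (r^2-t^2)))‖) t := by
    intro t
    rw [Gfun_eq_indicator_t]
    rw [← norm_indicator_eq_indicator_norm]
  calc ∫ t, ‖Gfun l r t‖ ∂(volume.restrict (Ioo 0 1))
      = ∫ t in Ioo 0 (min l r), ‖c * (1/(Real.sqrt (l^2-t^2) * Real.sqrt (r^2-t^2)))‖ := by
        simp_rw [habs]
        rw [integral_indicator measurableSet_Ioo,
          Measure.restrict_restrict measurableSet_Ioo, inter_eq_left.2 hsub]
    _ ≤ (π/2) / Real.sqrt (1-r^2) := ?_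
  -- now bound
  have key : ∀ (a b : ℝ), 0 < a → a < b → b ≤ 1 → |l^2 - r^2| = b^2 - a^2 →
      ∫ t in Ioo 0 a, |c| * (1/(Real.sqrt (b^2-t^2) * Real.sqrt (a^2-t^2)))
        ≤ (π/2) / Real.sqrt (1-r^2) := by
    intro a b ha hab hb1 hdiff
    rw [integral_const_mul]
    have h1 := kernel_integral_bound ha hab
    have hZ : 0 < Real.sqrt (b^2-a^2) := Real.sqrt_pos.2 (by nlinarith)
    have h2 : |c| = (b^2-a^2) * r / Real.sqrt (1-r^2) := by
      rw [hc, abs_div, abs_mul, hdiff, abs_of_pos hr.1,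
        abs_of_pos hsq1]
    have h3 : |c| * ((1/Real.sqrt (b^2-a^2)) * (π/2)) ≤ (π/2) / Real.sqrt (1-r^2) := by
      rw [h2]
      have hbr : (b^2-a^2) / Real.sqrt (b^2-a^2) = Real.sqrt (b^2-a^2) := Real.div_sqrt
      have hle1 : Real.sqrt (b^2-a^2) ≤ 1 := by
        rw [show (1:ℝ) = Real.sqrt 1 by simp]
        apply Real.sqrt_le_sqrt; nlinarith
      calc (b^2-a^2) * r / Real.sqrt (1-r^2) * ((1/Real.sqrt (b^2-a^2)) * (π/2))
          = (Real.sqrt (b^2-a^2) * r) * ((π/2) / Real.sqrt (1-r^2)) := by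
            field_simp
            linear_combination (-r) *
              (Real.sq_sqrt (show (0:ℝ) ≤ b^2-a^2 by nlinarith))
        _ ≤ 1 * ((π/2) / Real.sqrt (1-r^2)) := by
            apply mul_le_mul_of_nonneg_right ?_ (by positivity)
            nlinarith [hr.2, hr.1, Real.sqrt_nonneg (b^2-a^2)]
        _ = (π/2) / Real.sqrt (1-r^2) := one_mul _
    calc |c| * ∫ t in Ioo 0 a, 1/(Real.sqrt (b^2-t^2) * Real.sqrt (a^2-t^2))
        ≤ |c| * ((1/Real.sqrt (b^2-a^2)) * (π/2)) :=
          mul_le_mul_of_nonneg_left h1 (abs_nonneg _)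
      _ ≤ _ := h3
  rcases lt_or_gt_of_ne hrl with h | h
  · have := key r l hr.1 h hl1 (by rw [abs_of_pos (by nlinarith [hr.1] : (0:ℝ) < l^2 - r^2)])
    rw [min_eq_right h.le]
    refine le_trans (le_of_eq ?_) this
    apply setIntegral_congr_fun measurableSet_Ioo
    intro t ht
    have h1 : 0 < Real.sqrt (l^2-t^2) := Real.sqrt_pos.2 (by nlinarith [ht.1, ht.2])
    have h2 : 0 < Real.sqrt (r^2-t^2) := Real.sqrt_pos.2 (by nlinarith [ht.1, ht.2])
    dsimp only
    rw [norm_mul, Real.norm_eq_abs, Real.norm_eq_abs,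
      abs_of_pos (one_div_pos.2 (mul_pos h1 h2))]
  · have := key l r hl0 h hr.2.le (by rw [abs_of_neg (by nlinarith [hr.1, hl0] : l^2 - r^2 < 0)]; ring)
    rw [min_eq_left h.le]
    refine le_trans (le_of_eq ?_) this
    apply setIntegral_congr_fun measurableSet_Ioo
    intro t ht
    have h1 : 0 < Real.sqrt (l^2-t^2) := Real.sqrt_pos.2 (by nlinarith [ht.1, ht.2])
    have h2 : 0 < Real.sqrt (r^2-t^2) := Real.sqrt_pos.2 (by nlinarith [ht.1, ht.2, hl0, h])
    dsimp only
    rw [norm_mul, Real.norm_eq_abs, Real.norm_eq_abs,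
      abs_of_pos (one_div_pos.2 (mul_pos h1 h2)), mul_comm (Real.sqrt (r^2-t^2))]

end Bounds

section Assemble

lemma Gfun_prod_integrable (hl0 : 0 < l) (hl1 : l ≤ 1) :
    Integrable (Function.uncurry (Gfun l))
      ((volume.restrict (Ioo 0 1)).prod (volume.restrict (Ioo 0 1))) := by
  have hmeas : AEStronglyMeasurable (Function.uncurry (Gfun l))
      ((volume.restrict (Ioo 0 1)).prod (volume.restrict (Ioo 0 1))) :=
    (Gfun_measurable l).aestronglyMeasurable
  rw [integrable_prod_iff hmeas]
  constructor
  · filter_upwards [ae_restrict_mem measurableSet_Ioo] with r hr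
    exact Gfun_section_integrable hl0 hr
  · apply Integrable.mono' ((one_div_sqrt_integrableOn.const_mul (π/2)) :
      Integrable (fun r : ℝ => (π/2) * (1/Real.sqrt (1-r^2))) (volume.restrict (Ioo 0 1)))
    · exact hmeas.norm.integral_prod_right'
    · filter_upwards [ae_restrict_mem measurableSet_Ioo] with r hr
      rw [Real.norm_eq_abs,
        abs_of_nonneg (integral_nonneg (fun t => norm_nonneg _))]
      rw [mul_one_div]
      exact Gfun_norm_integral_le hl0 hl1 hr

lemma Gfun_t_integral (hl0 : 0 < l) {r : ℝ} (hr : r ∈ Ioo (0:ℝ) 1) :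
    ∫ t, Gfun l r t ∂(volume.restrict (Ioo 0 1))
      = (l^2-r^2)*r/Real.sqrt (1-r^2) *
          ∫ t in Ioo 0 (min l r), 1/(Real.sqrt (l^2-t^2)*Real.sqrt (r^2-t^2)) := by
  have hsub : Ioo 0 (min l r) ⊆ Ioo (0:ℝ) 1 :=
    Ioo_subset_Ioo (le_refl _) (le_of_lt (lt_of_le_of_lt (min_le_right _ _) hr.2))
  rw [Gfun_eq_indicator_t, integral_indicator measurableSet_Ioo,
    Measure.restrict_restrict measurableSet_Ioo, inter_eq_left.2 hsub,
    integral_const_mul]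

lemma pointwise_step (hl0 : 0 < l) (hl1 : l ≤ 1) {r : ℝ} (hr : r ∈ Ioo (0:ℝ) 1)
    (hrl : r ≠ l) :
    ellipticK (4*l*r/(l+r)^2) * (l-r) * r / Real.sqrt (1-r^2)
      = ∫ t, Gfun l r t ∂(volume.restrict (Ioo 0 1)) := by
  rw [Gfun_t_integral hl0 hr]
  rcases lt_or_gt_of_ne hrl with h | h
  · have hk := ellipticK_kernel hr.1 h
    rw [show 4*l*r/(l+r)^2 = 4*r*l/(r+l)^2 by ring, hk, min_eq_right h.le]
    ring
  · have hk := ellipticK_kernel hl0 h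
    rw [hk, min_eq_left h.le]
    have : ∫ t in Ioo 0 l, 1/(Real.sqrt (l^2-t^2)*Real.sqrt (r^2-t^2))
        = ∫ t in Ioo 0 l, 1/(Real.sqrt (r^2-t^2)*Real.sqrt (l^2-t^2)) := by
      apply setIntegral_congr_fun measurableSet_Ioo
      intro t _; dsimp only; rw [mul_comm]
    rw [this]
    ring

lemma Gfun_r_integral (hl0 : 0 < l) (hl1 : l ≤ 1) {t : ℝ} (ht : t ∈ Ioo (0:ℝ) 1) :
    ∫ r, Gfun l r t ∂(volume.restrict (Ioo 0 1))
      = (Ioo 0 l).indicator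
          (fun t => (1/Real.sqrt (l^2-t^2)) * (π/2 * (l^2 - (1+t^2)/2))) t := by
  by_cases htl : t < l
  · have hGr : (fun r => Gfun l r t) = (Ioi t).indicator
        (fun r => (l^2-r^2)*r/Real.sqrt (1-r^2) *
          (1/(Real.sqrt (l^2-t^2)*Real.sqrt (r^2-t^2)))) := by
      funext r
      simp only [Gfun, Set.indicator, mem_Ioi]
      by_cases h : t < r
      · rw [if_pos ⟨ht.1, htl, h⟩, if_pos h]
      · rw [if_neg (by tauto), if_neg h]
    rw [hGr, integral_indicator measurableSet_Ioi,
      Measure.restrict_restrict measurableSet_Ioi,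
      show Ioi t ∩ Ioo 0 1 = Ioo t 1 by
        ext x
        simp only [mem_inter_iff, mem_Ioi, mem_Ioo]
        constructor
        · rintro ⟨h1, _, h3⟩; exact ⟨h1, h3⟩
        · rintro ⟨h1, h2⟩; exact ⟨h1, lt_trans ht.1 h1, h2⟩]
    have hcongr : ∀ r ∈ Ioo t 1,
        (l^2-r^2)*r/Real.sqrt (1-r^2) * (1/(Real.sqrt (l^2-t^2)*Real.sqrt (r^2-t^2)))
          = (1/Real.sqrt (l^2-t^2)) * ((l^2-r^2)*r/(Real.sqrt (1-r^2)*Real.sqrt (r^2-t^2))) := by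
      intro r hrr
      have h1 : 0 < Real.sqrt (l^2-t^2) := Real.sqrt_pos.2 (by nlinarith [ht.1])
      have h2 : 0 < Real.sqrt (r^2-t^2) := Real.sqrt_pos.2 (by nlinarith [hrr.1, ht.1])
      have h3 : 0 < Real.sqrt (1-r^2) := Real.sqrt_pos.2 (by nlinarith [hrr.2, hrr.1, ht.1])
      simp only [one_div, mul_inv]
      ring
    rw [setIntegral_congr_fun measurableSet_Ioo hcongr, integral_const_mul,
      radial_integral ht.1 ht.2 l, indicator_of_mem (mem_Ioo.mpr ⟨ht.1, htl⟩)]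
  · have hGr : (fun r => Gfun l r t) = fun _ => (0:ℝ) := by
      funext r
      simp only [Gfun]
      rw [if_neg (by tauto)]
    rw [hGr, indicator_of_notMem (by simp [mem_Ioo]; intro; linarith [not_lt.1 htl])]
    simp

end Assemble
end Main

/-- **Elliptic integral formula.** For all `λ ∈ [0,1]`,
`∫₀¹ K(4λr/(λ+r)²) (λ-r) r/√(1-r²) dr = (π²/8)(3λ²/2 - 1)`.
(The point `r = λ` is a Lebesgue-null set, where the factor `λ - r` vanishes.) -/
theorem ellipticK_integral_formula
    (l : ℝ) (hl : l ∈ Set.Icc (0 : ℝ) 1) :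
    ∫ r in Set.Ioo (0 : ℝ) 1,
        ellipticK (4 * l * r / (l + r) ^ 2) * (l - r) * r / Real.sqrt (1 - r ^ 2)
      = Real.pi ^ 2 / 8 * (3 * l ^ 2 / 2 - 1) := by
  obtain ⟨hl0, hl1⟩ := hl
  rcases eq_or_lt_of_le hl0 with hzero | hl0'
  · -- l = 0
    subst hzero
    have hK : ellipticK 0 = π/2 := by
      rw [ellipticK_eq_sqrt (by norm_num : (0:ℝ) ≤ 1)]
      have : ∀ θ ∈ Ioo (0:ℝ) (π/2), 1 / Real.sqrt (1 - 0 * Real.sin θ^2) = 1 := by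
        intro θ _; simp
      rw [setIntegral_congr_fun measurableSet_Ioo this]
      simp [Real.volume_Ioo, ENNReal.toReal_ofReal (by positivity : (0:ℝ) ≤ π/2)]
      positivity
    have hpt : ∀ r ∈ Ioo (0:ℝ) 1,
        ellipticK (4 * 0 * r / (0 + r) ^ 2) * (0 - r) * r / Real.sqrt (1 - r ^ 2)
          = (-(π/2)) * (r^2 / Real.sqrt (1 - r^2)) := by
      intro r _
      rw [show 4 * 0 * r / (0 + r) ^ 2 = (0:ℝ) by simp, hK]
      ring
    rw [setIntegral_congr_fun measurableSet_Ioo hpt, integral_const_mul, sin_sq_Ioo]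
    ring
  · -- 0 < l
    have step1 : ∫ r in Set.Ioo (0:ℝ) 1,
        ellipticK (4 * l * r / (l + r) ^ 2) * (l - r) * r / Real.sqrt (1 - r ^ 2)
        = ∫ r in Set.Ioo (0:ℝ) 1, (∫ t, Gfun l r t ∂(volume.restrict (Ioo 0 1))) := by
      apply setIntegral_congr_ae measurableSet_Ioo
      have hne : ∀ᵐ (r:ℝ) ∂volume, r ≠ l := by
        rw [ae_iff]
        have : {r : ℝ | ¬ r ≠ l} = {l} := by
          ext x; simp
        rw [this]
        exact measure_singleton l
      filter_upwards [hne] with r hrl hr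
      exact pointwise_step hl0' hl1 hr hrl
    rw [step1, integral_integral_swap (Gfun_prod_integrable hl0' hl1)]
    rw [setIntegral_congr_fun measurableSet_Ioo
      (fun t ht => Gfun_r_integral hl0' hl1 ht)]
    rw [integral_indicator measurableSet_Ioo,
      Measure.restrict_restrict measurableSet_Ioo,
      inter_eq_left.2 (Ioo_subset_Ioo (le_refl _) hl1)]
    -- final substitution t = l sin φ
    rw [sin_subst hl0' (fun t => (1/Real.sqrt (l^2-t^2)) * (π/2 * (l^2 - (1+t^2)/2)))]
    have hcongr : ∀ φ ∈ Ioo (0:ℝ) (π/2),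
        (l * Real.cos φ) * ((1/Real.sqrt (l^2-(l*Real.sin φ)^2)) *
          (π/2 * (l^2 - (1+(l*Real.sin φ)^2)/2)))
        = (π/2*l^2 - π/4) - (π/4*l^2) * Real.sin φ^2 := by
      intro φ hφ
      have hc0 : 0 < Real.cos φ := Real.cos_pos_of_mem_Ioo ⟨by linarith [hφ.1, pi_pos], hφ.2⟩
      have h1 : l^2 - (l*Real.sin φ)^2 = (l*Real.cos φ)^2 := by
        have := sin_sq_add_cos_sq φ; nlinarith
      rw [h1, Real.sqrt_sq (by positivity)]
      field_simp
      ring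
    rw [setIntegral_congr_fun measurableSet_Ioo hcongr]
    rw [← integral_Ioc_eq_integral_Ioo, ← intervalIntegral.integral_of_le (by positivity)]
    rw [intervalIntegral.integral_sub intervalIntegrable_const
      ((by fun_prop : Continuous fun x => π/4*l^2 * sin x ^ 2).intervalIntegrable _ _)]
    rw [intervalIntegral.integral_const, intervalIntegral.integral_const_mul, integral_sin_sq]
    simp
    ring
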